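/- For any 0 ≤ η ≤ 1 and any E ≥ 0, the function x ↦ g(η·g⁻¹(x) + (1−η)·E) is convex on [0,∞). -/

import Mathlib

open Real Set Filter

noncomputable def g (E : ℝ) : ℝ := (E + 1) * Real.log (E + 1) - E * Real.log E

noncomputable def ginv : ℝ → ℝ := Function.invFunOn g (Set.Ici 0)

/-! ### Auxiliary facts about `g` -/

noncomputable def Lfun (t : ℝ) : ℝ := Real.log (t + 1) - Real.log t

lemma Lfun_pos {t : ℝ} (ht : 0 < t) : 0 < Lfun t :=
  sub_pos.2 (Real.log_lt_log ht (lt_add_one t))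

lemma Lfun_hasDerivAt {t : ℝ} (ht : 0 < t) :
    HasDerivAt Lfun ((t + 1)⁻¹ - t⁻¹) t := by
  have h1 : HasDerivAt (fun t : ℝ => Real.log (t + 1)) ((t + 1)⁻¹ * 1) t :=
    (Real.hasDerivAt_log (by positivity)).comp t ((hasDerivAt_id t).add_const 1)
  have h2 := h1.sub (Real.hasDerivAt_log ht.ne')
  simp only [mul_one] at h2
  exact h2

lemma Lfun_le_inv {t : ℝ} (ht : 0 < t) : Lfun t ≤ t⁻¹ := by
  have h : Real.log ((t + 1) / t) ≤ (t + 1) / t - 1 :=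
    Real.log_le_sub_one_of_pos (by positivity)
  rw [Real.log_div (by positivity) ht.ne'] at h
  have : (t + 1) / t - 1 = t⁻¹ := by field_simp; ring
  rw [this] at h; exact h

lemma inv_le_Lfun {t : ℝ} (ht : 0 < t) : (t + 1)⁻¹ ≤ Lfun t := by
  have h : Real.log (t / (t + 1)) ≤ t / (t + 1) - 1 :=
    Real.log_le_sub_one_of_pos (by positivity)
  rw [Real.log_div ht.ne' (by positivity)] at h
  have h2 : t / (t + 1) - 1 = -(t + 1)⁻¹ := by field_simp; ring
  rw [h2] at h
  unfold Lfun; linarith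

lemma g_zero : g 0 = 0 := by simp [g]

lemma g_continuous : Continuous g := by
  have h1 : Continuous fun E : ℝ => (E + 1) * Real.log (E + 1) :=
    Real.continuous_mul_log.comp (continuous_id.add continuous_const)
  exact h1.sub Real.continuous_mul_log

lemma g_hasDerivAt {t : ℝ} (ht : 0 < t) : HasDerivAt g (Lfun t) t := by
  have h1 : HasDerivAt (fun E : ℝ => (E + 1) * Real.log (E + 1))
      ((Real.log (t + 1) + 1) * 1) t :=
    (Real.hasDerivAt_mul_log (by positivity)).comp t ((hasDerivAt_id t).add_const 1)
  have h2 := h1.sub (Real.hasDerivAt_mul_log ht.ne')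
  have : (Real.log (t + 1) + 1) * 1 - (Real.log t + 1) = Lfun t := by
    unfold Lfun; ring
  rw [this] at h2
  exact h2

lemma g_strictMonoOn : StrictMonoOn g (Set.Ici 0) := by
  apply strictMonoOn_of_deriv_pos (convex_Ici 0) g_continuous.continuousOn
  intro x hx
  rw [interior_Ici] at hx
  rw [(g_hasDerivAt hx).deriv]
  exact Lfun_pos hx

lemma g_tendsto_atTop : Tendsto g atTop atTop := by
  have h1 : Tendsto (fun E : ℝ => Real.log (E + 1)) atTop atTop :=
    Real.tendsto_log_atTop.comp (tendsto_atTop_add_const_right _ 1 tendsto_id)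
  apply tendsto_atTop_mono' atTop _ h1
  filter_upwards [eventually_gt_atTop (0 : ℝ)] with E hE
  have : E * Real.log E ≤ E * Real.log (E + 1) :=
    mul_le_mul_of_nonneg_left (Real.log_le_log hE (by linarith)) hE.le
  unfold g; nlinarith

lemma g_surjOn : Set.SurjOn g (Set.Ici 0) (Set.Ici 0) := by
  intro x hx
  simp only [Set.mem_Ici] at hx
  obtain ⟨b, hb⟩ := (g_tendsto_atTop.eventually_ge_atTop x).exists_forall_of_atTop
  set b' := max b 0 with hb'
  have hbx : x ≤ g b' := hb b' (le_max_left _ _)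
  have hb0 : (0 : ℝ) ≤ b' := le_max_right _ _
  have := intermediate_value_Icc hb0 g_continuous.continuousOn
  have hmem : x ∈ Set.Icc (g 0) (g b') := ⟨by rw [g_zero]; exact hx, hbx⟩
  obtain ⟨t, ht, hgt⟩ := this hmem
  exact ⟨t, ht.1, hgt⟩

lemma ginv_g {t : ℝ} (ht : 0 ≤ t) : ginv (g t) = t :=
  g_strictMonoOn.injOn.leftInvOn_invFunOn ht

lemma g_ginv {x : ℝ} (hx : 0 ≤ x) : g (ginv x) = x :=
  Function.invFunOn_eq (g_surjOn hx)

lemma ginv_nonneg {x : ℝ} (hx : 0 ≤ x) : 0 ≤ ginv x :=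
  Function.invFunOn_mem (g_surjOn hx)

lemma ginv_zero : ginv 0 = 0 := by
  have := ginv_g (le_refl (0 : ℝ))
  rwa [g_zero] at this

lemma ginv_monotoneOn : MonotoneOn ginv (Set.Ici 0) := by
  intro x hx y hy hxy
  simp only [Set.mem_Ici] at hx hy
  have h1 : g (ginv x) ≤ g (ginv y) := by rw [g_ginv hx, g_ginv hy]; exact hxy
  exact (g_strictMonoOn.le_iff_le (ginv_nonneg hx) (ginv_nonneg hy)).1 h1

lemma ginv_pos {x : ℝ} (hx : 0 < x) : 0 < ginv x := by
  rcases (ginv_nonneg hx.le).lt_or_eq with h | h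
  · exact h
  · exfalso
    have := g_ginv hx.le
    rw [← h, g_zero] at this
    exact hx.ne this

lemma g_mem_Ici {t : ℝ} (ht : 0 ≤ t) : g t ∈ Set.Ici (0 : ℝ) := by
  have := g_strictMonoOn.monotoneOn (Set.self_mem_Ici) ht ht
  rw [g_zero] at this
  exact this

lemma ginv_image : ginv '' Set.Ici 0 = Set.Ici 0 := by
  apply Set.Subset.antisymm
  · rintro _ ⟨x, hx, rfl⟩
    exact ginv_nonneg hx
  · intro t ht
    exact ⟨g t, g_mem_Ici ht, ginv_g ht⟩

lemma ginv_continuousOn : ContinuousOn ginv (Set.Ici 0) := by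
  intro a ha
  simp only [Set.mem_Ici] at ha
  rcases ha.lt_or_eq with h | h
  · apply ContinuousAt.continuousWithinAt
    apply continuousAt_of_monotoneOn_of_image_mem_nhds ginv_monotoneOn
      (Ici_mem_nhds h)
    rw [ginv_image]
    exact Ici_mem_nhds (ginv_pos h)
  · subst h
    have : ContinuousWithinAt ginv (Set.Ici (0 : ℝ)) 0 := by
      apply continuousWithinAt_right_of_monotoneOn_of_image_mem_nhdsWithin ginv_monotoneOn
        self_mem_nhdsWithin
      rw [ginv_image, ginv_zero]
      exact self_mem_nhdsWithin
    exact this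

lemma ginv_hasDerivAt {x : ℝ} (hx : 0 < x) :
    HasDerivAt ginv (Lfun (ginv x))⁻¹ x := by
  have hN : 0 < ginv x := ginv_pos hx
  apply HasDerivAt.of_local_left_inverse
    (ginv_continuousOn.continuousAt (Ici_mem_nhds hx))
    (g_hasDerivAt hN) (Lfun_pos hN).ne'
  filter_upwards [Ici_mem_nhds hx] with y hy
  exact g_ginv hy

/-! ### The key inequality -/

lemma h_antitoneOn : AntitoneOn (fun t : ℝ => (t + 1) * Lfun t) (Set.Ioi 0) := by
  have hd : ∀ t ∈ Set.Ioi (0:ℝ), HasDerivAt (fun t : ℝ => (t + 1) * Lfun t)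
      (1 * Lfun t + (t + 1) * ((t + 1)⁻¹ - t⁻¹)) t := fun t ht =>
    ((hasDerivAt_id' (x := t)).add_const 1).mul (Lfun_hasDerivAt ht)
  apply antitoneOn_of_hasDerivWithinAt_nonpos (convex_Ioi 0)
    (f' := fun t => 1 * Lfun t + (t + 1) * ((t + 1)⁻¹ - t⁻¹))
  · intro t ht
    exact (hd t ht).continuousAt.continuousWithinAt
  · intro t ht
    rw [interior_Ioi] at ht
    exact (hd t ht).hasDerivWithinAt
  · intro t ht
    rw [interior_Ioi, Set.mem_Ioi] at ht
    have ht0 : t ≠ 0 := ht.ne'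
    have ht1 : t + 1 ≠ 0 := by positivity
    have h1 : Lfun t ≤ t⁻¹ := Lfun_le_inv ht
    have heq : 1 * Lfun t + (t + 1) * ((t + 1)⁻¹ - t⁻¹) = Lfun t - t⁻¹ := by
      field_simp
      ring
    rw [heq]
    linarith

lemma psi_monotoneOn : MonotoneOn (fun t : ℝ => t * ((t + 1) * Lfun t)) (Set.Ioi 0) := by
  have hd : ∀ t ∈ Set.Ioi (0:ℝ), HasDerivAt (fun t : ℝ => t * ((t + 1) * Lfun t))
      (1 * ((t + 1) * Lfun t) +
        t * (1 * Lfun t + (t + 1) * ((t + 1)⁻¹ - t⁻¹))) t := fun t ht =>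
    (hasDerivAt_id' (x := t)).mul
      (((hasDerivAt_id' (x := t)).add_const 1).mul (Lfun_hasDerivAt ht))
  apply monotoneOn_of_hasDerivWithinAt_nonneg (convex_Ioi 0)
    (f' := fun t => 1 * ((t + 1) * Lfun t) +
      t * (1 * Lfun t + (t + 1) * ((t + 1)⁻¹ - t⁻¹)))
  · intro t ht
    exact (hd t ht).continuousAt.continuousWithinAt
  · intro t ht
    rw [interior_Ioi] at ht
    exact (hd t ht).hasDerivWithinAt
  · intro t ht
    rw [interior_Ioi, Set.mem_Ioi] at ht
    have ht0 : t ≠ 0 := ht.ne'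
    have ht1 : t + 1 ≠ 0 := by positivity
    have h1 : (t + 1)⁻¹ ≤ Lfun t := inv_le_Lfun ht
    have heq : 1 * ((t + 1) * Lfun t) + t * (1 * Lfun t + (t + 1) * ((t + 1)⁻¹ - t⁻¹)) =
        (2 * t + 1) * Lfun t - 1 := by
      field_simp
      ring
    rw [heq]
    have h4 : (1:ℝ) ≤ (2 * t + 1) / (t + 1) :=
      (one_le_div (by positivity)).2 (by linarith)
    rw [div_eq_mul_inv] at h4
    have h5 : (2 * t + 1) * (t + 1)⁻¹ ≤ (2 * t + 1) * Lfun t :=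
      mul_le_mul_of_nonneg_left h1 (by linarith)
    linarith

lemma key_ineq {η c n : ℝ} (hη : 0 < η) (hη1 : η ≤ 1) (hc : 0 ≤ c) (hn : 0 < n) :
    η * (n * ((n + 1) * Lfun n)) ≤
      (η * n + c) * (((η * n + c) + 1) * Lfun (η * n + c)) := by
  set M := η * n + c with hM
  have hηn : 0 < η * n := mul_pos hη hn
  have hMpos : 0 < M := by positivity
  have h1 : (η * n) * ((η * n + 1) * Lfun (η * n)) ≤ M * ((M + 1) * Lfun M) :=
    psi_monotoneOn hηn hMpos (by linarith)
  have h2 : (n + 1) * Lfun n ≤ (η * n + 1) * Lfun (η * n) :=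
    h_antitoneOn hηn hn (by nlinarith)
  calc η * (n * ((n + 1) * Lfun n)) = (η * n) * ((n + 1) * Lfun n) := by ring
  _ ≤ (η * n) * ((η * n + 1) * Lfun (η * n)) :=
      mul_le_mul_of_nonneg_left h2 hηn.le
  _ ≤ M * ((M + 1) * Lfun M) := h1

/-! ### Monotonicity of the derivative -/

lemma D_monotoneOn {η c : ℝ} (hη : 0 < η) (hη1 : η ≤ 1) (hc : 0 ≤ c) :
    MonotoneOn (fun n : ℝ => Lfun (η * n + c) * (η * (Lfun n)⁻¹)) (Set.Ioi 0) := by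
  have hasD : ∀ n ∈ Set.Ioi (0:ℝ), HasDerivAt
      (fun n : ℝ => Lfun (η * n + c) * (η * (Lfun n)⁻¹))
      ((((η * n + c) + 1)⁻¹ - (η * n + c)⁻¹) * η * (η * (Lfun n)⁻¹) +
        Lfun (η * n + c) * (η * (-((n + 1)⁻¹ - n⁻¹) / Lfun n ^ 2))) n := by
    intro n hn
    rw [Set.mem_Ioi] at hn
    have hM : 0 < η * n + c := by
      have : 0 < η * n := mul_pos hη hn
      linarith
    have hU : HasDerivAt (fun n : ℝ => Lfun (η * n + c))
        ((((η * n + c) + 1)⁻¹ - (η * n + c)⁻¹) * η) n := by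
      have := (Lfun_hasDerivAt hM).comp n
        (((hasDerivAt_id' (x := n)).const_mul η).add_const c)
      simp only [mul_one] at this
      exact this
    have hW : HasDerivAt (fun n : ℝ => η * (Lfun n)⁻¹)
        (η * (-((n + 1)⁻¹ - n⁻¹) / Lfun n ^ 2)) n :=
      ((Lfun_hasDerivAt hn).inv (Lfun_pos hn).ne').const_mul η
    exact hU.mul hW
  apply monotoneOn_of_hasDerivWithinAt_nonneg (convex_Ioi 0)
    (f' := fun n => (((η * n + c) + 1)⁻¹ - (η * n + c)⁻¹) * η * (η * (Lfun n)⁻¹) +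
      Lfun (η * n + c) * (η * (-((n + 1)⁻¹ - n⁻¹) / Lfun n ^ 2)))
  · intro n hn
    exact (hasD n hn).continuousAt.continuousWithinAt
  · intro n hn
    rw [interior_Ioi] at hn
    exact (hasD n hn).hasDerivWithinAt
  · intro n hn
    rw [interior_Ioi, Set.mem_Ioi] at hn
    set M := η * n + c with hMdef
    have hM : 0 < M := by
      have : 0 < η * n := mul_pos hη hn
      linarith
    have ha : 0 < Lfun n := Lfun_pos hn
    have hb : 0 < Lfun M := Lfun_pos hM
    have hkey := key_ineq hη hη1 hc hn
    rw [← hMdef] at hkey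
    have heq : (((M) + 1)⁻¹ - M⁻¹) * η * (η * (Lfun n)⁻¹) +
        Lfun M * (η * (-((n + 1)⁻¹ - n⁻¹) / Lfun n ^ 2)) =
        η / (M * (M + 1) * (n * (n + 1)) * Lfun n ^ 2) *
          (M * ((M + 1) * Lfun M) - η * (n * ((n + 1) * Lfun n))) := by
      have hn0 : n ≠ 0 := hn.ne'
      have hn1 : n + 1 ≠ 0 := by positivity
      have hM0 : M ≠ 0 := hM.ne'
      have hM1 : M + 1 ≠ 0 := by positivity
      have ha0 : Lfun n ≠ 0 := ha.ne'
      field_simp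
      ring
    rw [heq]
    apply mul_nonneg
    · positivity
    · linarith

/-! ### Main theorem -/

theorem attenuator_thermal_entropy_convex (η E : ℝ) (hη0 : 0 ≤ η) (hη1 : η ≤ 1)
    (hE : 0 ≤ E) :
    ConvexOn ℝ (Set.Ici 0) (fun x => g (η * ginv x + (1 - η) * E)) := by
  rcases hη0.lt_or_eq with hη | hη
  · -- η > 0
    set c := (1 - η) * E with hc_def
    have hc : 0 ≤ c := mul_nonneg (by linarith) hE
    have hf : ∀ x ∈ Set.Ioi (0:ℝ), HasDerivAt (fun x => g (η * ginv x + c))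
        (Lfun (η * ginv x + c) * (η * (Lfun (ginv x))⁻¹)) x := by
      intro x hx
      rw [Set.mem_Ioi] at hx
      have hN : 0 < ginv x := ginv_pos hx
      have hM : 0 < η * ginv x + c := by positivity
      have hinner : HasDerivAt (fun x => η * ginv x + c) (η * (Lfun (ginv x))⁻¹) x :=
        ((ginv_hasDerivAt hx).const_mul η).add_const c
      have := (g_hasDerivAt hM).comp x hinner
      exact this
    apply MonotoneOn.convexOn_of_deriv (convex_Ici 0)
    · -- continuity
      exact g_continuous.comp_continuousOn
        ((continuousOn_const.mul ginv_continuousOn).add continuousOn_const)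
    · -- differentiability on interior
      rw [interior_Ici]
      intro x hx
      exact ((hf x hx).differentiableAt).differentiableWithinAt
    · -- monotone derivative
      rw [interior_Ici]
      intro x hx y hy hxy
      rw [(hf x hx).deriv, (hf y hy).deriv]
      have hxmem : ginv x ∈ Set.Ioi (0:ℝ) := ginv_pos hx
      have hymem : ginv y ∈ Set.Ioi (0:ℝ) := ginv_pos hy
      have hmono : ginv x ≤ ginv y :=
        ginv_monotoneOn (Set.mem_Ici.2 (le_of_lt hx)) (Set.mem_Ici.2 (le_of_lt hy)) hxy
      exact D_monotoneOn hη hη1 hc hxmem hymem hmono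
  · -- η = 0
    subst hη
    simp only [zero_mul, zero_add, sub_zero, one_mul]
    exact convexOn_const _ (convex_Ici 0)
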